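/- Let G be a finite simple graph with a k-dimensional orthogonal representation {ψ_w}_{w∈V(G)}, and let S ⊆ V(G) be a set of vertices for which there exist complex scalars λ_w, w ∈ S, all nonzero, with Σ_{w∈S} λ_w ψ_w = 0. Then {ψ_w}_{w∈V(G)} is also a valid k-dimensional orthogonal representation of the graph G' obtained from G by performing set identification with respect to S; in particular, G' admits a k-dimensional orthogonal representation. -/

import Mathlib

open scoped ComplexConjugate

/-- The standard (conjugate-linear in the first argument) inner product on `ι → ℂ`. -/
noncomputable def cdot {ι : Type} [Fintype ι] (x y : ι → ℂ) : ℂ :=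
  ∑ i, conj (x i) * y i

/-- A `k`-dimensional (complex) orthogonal representation of a graph. -/
def IsOrthRep {V : Type} (G : SimpleGraph V) (k : ℕ) (ψ : V → Fin k → ℂ) : Prop :=
  (∀ v, cdot (ψ v) (ψ v) = 1) ∧ ∀ u v, G.Adj u v → cdot (ψ u) (ψ v) = 0

/-- The orthogonal rank `ξ(G)`: the least `k ≥ 1` admitting a `k`-dimensional
orthogonal representation. -/
noncomputable def orthRank {V : Type} (G : SimpleGraph V) : ℕ :=
  sInf {k | 1 ≤ k ∧ ∃ ψ : V → Fin k → ℂ, IsOrthRep G k ψ}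

/-- A quantum `k`-colouring of `G` on `ℂ^d`: projective measurements
`{E v c}_{c ∈ Fin k}` such that `E u c * E v c = 0` for adjacent `u, v`. -/
def IsQuantumColoring {V : Type} (G : SimpleGraph V) (k d : ℕ)
    (E : V → Fin k → Matrix (Fin d) (Fin d) ℂ) : Prop :=
  (∀ v c, (E v c).IsHermitian) ∧
  (∀ v c, E v c * E v c = E v c) ∧
  (∀ v, ∑ c, E v c = 1) ∧
  ∀ u v, G.Adj u v → ∀ c, E u c * E v c = 0

/-- The quantum chromatic number `χ_q(G)`: the least `k ≥ 1` for which a quantum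
`k`-colouring exists on `ℂ^d` for some `d ≥ 1`. -/
noncomputable def quantumChromaticNumber {V : Type} (G : SimpleGraph V) : ℕ :=
  sInf {k | 1 ≤ k ∧ ∃ d, 1 ≤ d ∧
    ∃ E : V → Fin k → Matrix (Fin d) (Fin d) ℂ, IsQuantumColoring G k d E}

/-- A rank-`r` quantum `k`-colouring: a quantum `k`-colouring on `ℂ^(r*k)` in which
every projector has rank exactly `r`. -/
def IsRankRQuantumColoring {V : Type} (G : SimpleGraph V) (r k : ℕ)
    (E : V → Fin k → Matrix (Fin (r * k)) (Fin (r * k)) ℂ) : Prop :=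
  IsQuantumColoring G k (r * k) E ∧ ∀ v c, (E v c).rank = r

/-- The rank-`r` quantum chromatic number `χ_q^{(r)}(G)`. -/
noncomputable def rankChromaticNumber {V : Type} (G : SimpleGraph V) (r : ℕ) : ℕ :=
  sInf {k | 1 ≤ k ∧ ∃ E : V → Fin k → Matrix (Fin (r * k)) (Fin (r * k)) ℂ,
    IsRankRQuantumColoring G r k E}

/-- The chromatic number of `G` as a natural number: the least `k ≥ 1` for which a
proper `k`-colouring exists. -/
noncomputable def chromNat {V : Type} (G : SimpleGraph V) : ℕ :=
  sInf {k | 1 ≤ k ∧ G.Colorable k}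

/-- The clique number `ω(G)`. -/
noncomputable def cliqueNum' {V : Type} (G : SimpleGraph V) : ℕ :=
  sSup {n | ∃ S : Finset V, G.IsNClique n S}

/-- Identifying vertex `u` with vertex `v`: delete `u`, and add an edge `(v, w)` for
every `w ∉ {u, v}` that was adjacent to `u` in `G`. -/
def identify {V : Type} (G : SimpleGraph V) (u v : V) :
    SimpleGraph {w : V // w ≠ u} :=
  SimpleGraph.fromRel fun a b =>
    G.Adj ↑a ↑b ∨ ((a : V) = v ∧ G.Adj u ↑b) ∨ ((b : V) = v ∧ G.Adj u ↑a)

/-- Set identification of `G` with respect to `S`: for `u ∈ S` and `v ∉ S`, the edge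
`(u, v)` is added whenever `v` is adjacent in `G` to every `w ∈ S \ {u}`. -/
def setIdentify {V : Type} (G : SimpleGraph V) (S : Set V) : SimpleGraph V :=
  SimpleGraph.fromRel fun a b =>
    G.Adj a b ∨ (a ∈ S ∧ b ∉ S ∧ ∀ w ∈ S, w ≠ a → G.Adj b w)

/-- if the vectors assigned to a set `S` of vertices satisfy a linear
dependence with all coefficients nonzero, then the same assignment is a valid
`k`-dimensional orthogonal representation of the set identification of `G` with
respect to `S`; in particular, that graph admits a `k`-dimensional orthogonal
representation. -/

lemma cdot_conj {ι : Type} [Fintype ι] (x y : ι → ℂ) : cdot x y = conj (cdot y x) := by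
  simp [cdot, Finset.sum_comm, map_sum, mul_comm]

lemma cdot_sum_right {ι : Type} [Fintype ι] {α : Type} (s : Finset α) (x : ι → ℂ)
    (f : α → ι → ℂ) : cdot x (∑ a ∈ s, f a) = ∑ a ∈ s, cdot x (f a) := by
  unfold cdot
  rw [Finset.sum_comm]
  refine Finset.sum_congr rfl fun i _ => ?_
  simp [Finset.mul_sum]

lemma cdot_smul_right {ι : Type} [Fintype ι] (c : ℂ) (x y : ι → ℂ) :
    cdot x (c • y) = c * cdot x y := by
  unfold cdot
  rw [Finset.mul_sum]
  exact Finset.sum_congr rfl fun i _ => by simp; ring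

lemma key_orth {V : Type} [Fintype V]
    (G : SimpleGraph V) (k : ℕ) (ψ : V → Fin k → ℂ) (hψ : IsOrthRep G k ψ)
    (S : Finset V) (l : V → ℂ) (hl : ∀ w ∈ S, l w ≠ 0)
    (hsum : ∑ w ∈ S, l w • ψ w = 0) (a b : V) (ha : a ∈ S) (hb : b ∉ (S : Set V))
    (hadj : ∀ w ∈ (S : Set V), w ≠ a → G.Adj b w) : cdot (ψ b) (ψ a) = 0 := by
  classical
  have h0 : cdot (ψ b) (∑ w ∈ S, l w • ψ w) = 0 := by rw [hsum]; simp [cdot]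
  rw [cdot_sum_right] at h0
  have : ∀ w ∈ S, cdot (ψ b) (l w • ψ w) = if w = a then l a * cdot (ψ b) (ψ a) else 0 := by
    intro w hw
    by_cases hwa : w = a
    · simp [hwa, cdot_smul_right]
    · rw [cdot_smul_right, hψ.2 b w (hadj w (by simpa using hw) hwa), mul_zero, if_neg hwa]
  rw [Finset.sum_congr rfl this, Finset.sum_ite_eq' S a _] at h0
  simp only [if_pos ha] at h0
  exact (mul_eq_zero.1 h0).resolve_left (hl a ha)

theorem orth_rep_setIdentify {V : Type} [Fintype V]
    (G : SimpleGraph V) (k : ℕ) (ψ : V → Fin k → ℂ) (hψ : IsOrthRep G k ψ)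
    (S : Finset V) (l : V → ℂ) (hl : ∀ w ∈ S, l w ≠ 0)
    (hsum : ∑ w ∈ S, l w • ψ w = 0) :
    IsOrthRep (setIdentify G (S : Set V)) k ψ := by
  constructor
  · exact hψ.1
  · intro u v huv
    rw [setIdentify, SimpleGraph.fromRel_adj] at huv
    obtain ⟨hne, h | h⟩ := huv
    · rcases h with h | ⟨ha, hb, hadj⟩
      · exact hψ.2 u v h
      · rw [cdot_conj]
        rw [key_orth G k ψ hψ S l hl hsum u v ha hb hadj]
        simp
    · rcases h with h | ⟨ha, hb, hadj⟩
      · exact hψ.2 u v (G.adj_symm h)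
      · exact key_orth G k ψ hψ S l hl hsum v u ha hb hadj
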